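/- Let τ_1, …, τ_n be Hermitian unital linear functionals on ℂ⟨x_1⟩, …, ℂ⟨x_n⟩ respectively, and let τ be a Hermitian unital linear functional on ℂ⟨x⟩ such that the restriction of τ to ℂ⟨x_{i₀}⟩ is different from τ_{i₀} for some 1 ≤ i₀ ≤ n. Then inf over self-adjoint h ∈ ℂ⟨x⟩ of (τ(h) + π_{orb,R}(h : (τ_i)_{i=1}^n)) = −∞. -/

import Mathlib

/-!
Orbital free pressure and its Legendre transform (Hiai–Ueda).

Common infrastructure: the free unital complex *-algebra on self-adjoint generators,
matrix microstate sets, the orbital free pressure, the orbital η-entropy, the orbital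
free entropy; Lebesgue measure on self-adjoint matrices, the free pressure, free
entropy and η-entropy; Gibbs (micro-)ensembles.

The Haar probability measures `γ_{U(N)}` on the unitary groups are formalized as a
family of left-invariant Borel probability measures (which uniquely determines them).
-/

open MeasureTheory Filter Topology
open scoped BigOperators ENNReal TensorProduct ComplexOrder

noncomputable section

namespace OrbFP

/-- The algebra of `N × N` complex matrices. -/
abbrev Mat (N : ℕ) := Matrix (Fin N) (Fin N) ℂ

/-- The normalized trace `tr_N`. -/
def trN (N : ℕ) (A : Mat N) : ℂ := A.trace / (N : ℂ)

/-- The (ℓ²-)operator norm of a matrix. -/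
def opNorm {N : ℕ} (A : Mat N) : ℝ := ‖Matrix.toEuclideanCLM (𝕜 := ℂ) A‖

/-- The unitary group `U(N)`. -/
abbrev UN (N : ℕ) := Matrix.unitaryGroup (Fin N) ℂ

instance (N : ℕ) : MeasurableSpace (UN N) := borel _
instance (N : ℕ) : BorelSpace (UN N) := ⟨rfl⟩
instance (N : ℕ) : MeasurableSpace (Mat N) := borel _
instance (N : ℕ) : BorelSpace (Mat N) := ⟨rfl⟩

/-- The free unital complex *-algebra on self-adjoint generators indexed by `X`. -/
abbrev FAlg (X : Type) := FreeAlgebra ℂ X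

/-- Coefficient-wise complex conjugation on the free algebra. -/
def conjCoeff {X : Type} (p : FAlg X) : FAlg X :=
  (FreeAlgebra.equivMonoidAlgebraFreeMonoid (R := ℂ) (X := X)).symm
    (MonoidAlgebra.ofCoeff (Finsupp.mapRange (starRingEnd ℂ) (map_zero _)
      (FreeAlgebra.equivMonoidAlgebraFreeMonoid (R := ℂ) (X := X) p).coeff))

/-- The star operation of the free complex *-algebra with self-adjoint generators:
reverse words (the `star` of `FreeAlgebra`) and conjugate the coefficients. -/
def fstar {X : Type} (p : FAlg X) : FAlg X := star (conjCoeff p)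

/-- Self-adjointness in the free complex *-algebra. -/
def IsSA {X : Type} (p : FAlg X) : Prop := fstar p = p

/-- A Hermitian unital linear functional. -/
def IsHermState {X : Type} (τ : FAlg X →ₗ[ℂ] ℂ) : Prop :=
  τ 1 = 1 ∧ ∀ p, τ (fstar p) = starRingEnd ℂ (τ p)

/-- Ordered product of a word of matrices. -/
def wordMat {N : ℕ} {κ : Type} (A : κ → Mat N) (w : List κ) : Mat N := (w.map A).prod

/-- Ordered product of a word of generators in the free algebra. -/
def wordAlg {κ : Type} (w : List κ) : FAlg κ := (w.map (FreeAlgebra.ι ℂ)).prod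

/-- The microstate set `Γ_R(τ; N, m, δ)` of a functional on the free algebra on `κ`:
tuples of self-adjoint matrices of operator norm at most `R` whose normalized trace of
every word of length `1 ≤ l ≤ m` is `δ`-close to the corresponding moment of `τ`. -/
def microSet {κ : Type} (R : ℝ) (τ : FAlg κ →ₗ[ℂ] ℂ) (N m : ℕ) (δ : ℝ) :
    Set (κ → Mat N) :=
  {A | (∀ j, (A j).IsHermitian ∧ opNorm (A j) ≤ R) ∧
    ∀ w : List κ, w ≠ [] → w.length ≤ m →
      ‖trN N (wordMat A w) - τ (wordAlg w)‖ < δ}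

/-- `τ` has finite-dimensional approximants. -/
def HasFDA {κ : Type} (R : ℝ) (τ : FAlg κ →ₗ[ℂ] ℂ) : Prop :=
  ∀ (m : ℕ) (δ : ℝ), 0 < δ → ∃ N, (microSet R τ N m δ).Nonempty

variable {ι : Type} [Fintype ι]

/-- The index of the generators `x_{ij}`, `i ∈ ι`, `1 ≤ j ≤ r i`. -/
abbrev gen (r : ι → ℕ) := Σ i : ι, Fin (r i)

/-- Evaluation of the full free algebra at a family of matrix tuples. -/
def evalA {r : ι → ℕ} {N : ℕ} (A : ∀ i, Fin (r i) → Mat N) :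
    FAlg (gen r) →ₐ[ℂ] Mat N :=
  FreeAlgebra.lift ℂ fun p : gen r => A p.1 p.2

/-- The canonical embedding `ℂ⟨x_i⟩ → ℂ⟨x⟩`. -/
def inclAlg (r : ι → ℕ) (i : ι) : FAlg (Fin (r i)) →ₐ[ℂ] FAlg (gen r) :=
  FreeAlgebra.lift ℂ fun j => FreeAlgebra.ι ℂ (⟨i, j⟩ : gen r)

/-- The restriction of a functional on `ℂ⟨x⟩` to `ℂ⟨x_i⟩`. -/
def restr {r : ι → ℕ} (τ : FAlg (gen r) →ₗ[ℂ] ℂ) (i : ι) :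
    FAlg (Fin (r i)) →ₗ[ℂ] ℂ :=
  τ ∘ₗ (inclAlg r i).toLinearMap

/-- The embedding of the free algebra of a sub-system of the variables. -/
def inclSub {r : ι → ℕ} (P : ι → Prop) :
    FAlg (gen fun i : Subtype P => r i.1) →ₐ[ℂ] FAlg (gen r) :=
  FreeAlgebra.lift ℂ fun p => FreeAlgebra.ι ℂ (⟨p.1.1, p.2⟩ : gen r)

/-- Restriction of a functional to a sub-system of the variables. -/
def restrSub {r : ι → ℕ} (P : ι → Prop) (τ : FAlg (gen r) →ₗ[ℂ] ℂ) :
    FAlg (gen fun i : Subtype P => r i.1) →ₗ[ℂ] ℂ :=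
  τ ∘ₗ (inclSub P).toLinearMap

/-- The conjugated family `(V_i A_i V_i^*)_i`. -/
def conjFam {r : ι → ℕ} {N : ℕ} (V : ι → UN N) (A : ∀ i, Fin (r i) → Mat N) :
    ∀ i, Fin (r i) → Mat N :=
  fun i j => (V i : Mat N) * A i j * star (V i : Mat N)

/-- The Gibbs weight `exp(-N² tr_N(h((V_i A_i V_i^*)_i)))`. -/
def gibbsWt {r : ι → ℕ} {N : ℕ} (h : FAlg (gen r)) (A : ∀ i, Fin (r i) → Mat N)
    (V : ι → UN N) : ℝ :=
  Real.exp (-(N : ℝ) ^ 2 * (trN N (evalA (conjFam V A) h)).re)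

/-- The product `∏_i Γ_R(τ_i; N, m, δ)` of the microstate sets. -/
def microProd (R : ℝ) {r : ι → ℕ} (τs : ∀ i, FAlg (Fin (r i)) →ₗ[ℂ] ℂ)
    (N m : ℕ) (δ : ℝ) : Set (∀ i, Fin (r i) → Mat N) :=
  {A | ∀ i, A i ∈ microSet R (τs i) N m δ}

/-- The finite-`N` orbital free pressure `π_{orb,R}(h : (τ_i); N, m, δ)`
(`-∞` when some microstate set is empty). -/
def piOrbN (γ : ∀ N, Measure (UN N)) (R : ℝ) {r : ι → ℕ} (h : FAlg (gen r))
    (τs : ∀ i, FAlg (Fin (r i)) →ₗ[ℂ] ℂ) (N m : ℕ) (δ : ℝ) : EReal :=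
  ⨆ A ∈ microProd R τs N m δ,
    ((Real.log (∫ V : ι → UN N, gibbsWt h A V ∂(Measure.pi fun _ => γ N)) : ℝ) : EReal)

/-- The orbital free pressure `π_{orb,R}(h : (τ_i))`. -/
def piOrb (γ : ∀ N, Measure (UN N)) (R : ℝ) {r : ι → ℕ} (h : FAlg (gen r))
    (τs : ∀ i, FAlg (Fin (r i)) →ₗ[ℂ] ℂ) : EReal :=
  ⨅ (m : ℕ) (δ : ℝ) (_ : 0 < δ),
    Filter.limsup
      (fun N : ℕ => ((((N : ℝ) ^ 2)⁻¹ : ℝ) : EReal) * piOrbN γ R h τs N m δ)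
      Filter.atTop

/-- The "universal" `R`-norm `‖h‖_R`: the supremum of the operator norms of all
evaluations of `h` at families of self-adjoint matrices of norm at most `R`. -/
def normR (R : ℝ) {r : ι → ℕ} (h : FAlg (gen r)) : ℝ :=
  sSup {t : ℝ | ∃ (N : ℕ) (A : ∀ i, Fin (r i) → Mat N),
    (∀ i j, (A i j).IsHermitian ∧ opNorm (A i j) ≤ R) ∧ t = opNorm (evalA A h)}

/-- The minus Legendre transform `inf_h (φ(h) + π_{orb,R}(h : (τ_i)))` of the orbital
free pressure, relative to `(τ_i)`. -/
def etaOrbRel (γ : ∀ N, Measure (UN N)) (R : ℝ) {r : ι → ℕ}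
    (τ : FAlg (gen r) →ₗ[ℂ] ℂ) (τs : ∀ i, FAlg (Fin (r i)) →ₗ[ℂ] ℂ) : EReal :=
  ⨅ (h : FAlg (gen r)) (_ : IsSA h),
    (((τ h).re : ℝ) : EReal) + piOrb γ R h τs

/-- The orbital `η`-entropy `η_{orb,R}(τ)`. -/
def etaOrb (γ : ∀ N, Measure (UN N)) (R : ℝ) {r : ι → ℕ}
    (τ : FAlg (gen r) →ₗ[ℂ] ℂ) : EReal :=
  etaOrbRel γ R τ (restr τ)

/-- The microstate set `Γ_R(τ; N, m, δ)` of a functional on the full free algebra. -/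
def microFull (R : ℝ) {r : ι → ℕ} (τ : FAlg (gen r) →ₗ[ℂ] ℂ) (N m : ℕ) (δ : ℝ) :
    Set (∀ i, Fin (r i) → Mat N) :=
  {A | (∀ i j, (A i j).IsHermitian ∧ opNorm (A i j) ≤ R) ∧
    ∀ w : List (gen r), w ≠ [] → w.length ≤ m →
      ‖trN N (wordMat (fun p : gen r => A p.1 p.2) w) - τ (wordAlg w)‖ < δ}

/-- `τ` (on the full algebra) has finite-dimensional approximants. -/
def HasFDAFull (R : ℝ) {r : ι → ℕ} (τ : FAlg (gen r) →ₗ[ℂ] ℂ) : Prop :=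
  ∀ (m : ℕ) (δ : ℝ), 0 < δ → ∃ N, (microFull R τ N m δ).Nonempty

/-- The orbital microstate set `Γ_orb(τ : (A_i); N, m, δ)`. -/
def orbSet (R : ℝ) {r : ι → ℕ} (τ : FAlg (gen r) →ₗ[ℂ] ℂ) {N : ℕ}
    (A : ∀ i, Fin (r i) → Mat N) (m : ℕ) (δ : ℝ) : Set (ι → UN N) :=
  {V | conjFam V A ∈ microFull R τ N m δ}

/-- The orbital free entropy `χ_{orb,R}(τ)`. -/
def chiOrb (γ : ∀ N, Measure (UN N)) (R : ℝ) {r : ι → ℕ}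
    (τ : FAlg (gen r) →ₗ[ℂ] ℂ) : EReal :=
  ⨅ (m : ℕ) (δ : ℝ) (_ : 0 < δ),
    Filter.limsup
      (fun N : ℕ => ((((N : ℝ) ^ 2)⁻¹ : ℝ) : EReal) *
        ⨆ A ∈ microProd R (restr τ) N m δ,
          ENNReal.log ((Measure.pi fun _ : ι => γ N) (orbSet R τ A m δ)))
      Filter.atTop

/-- A tracial `R₀`-state on `ℂ⟨x⟩`. -/
def IsTracialRState {r : ι → ℕ} (R₀ : ℝ) (τ : FAlg (gen r) →ₗ[ℂ] ℂ) : Prop :=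
  IsHermState τ ∧ (∀ p q, τ (p * q) = τ (q * p)) ∧
  (∀ p, 0 ≤ (τ (fstar p * p)).re) ∧
  ∀ (i : ι) (j : Fin (r i)) (k : ℕ) (p : FAlg (gen r)),
    (τ (fstar p * FreeAlgebra.ι ℂ (⟨i, j⟩ : gen r) ^ (2 * k) * p)).re
      ≤ R₀ ^ (2 * k) * (τ (fstar p * p)).re

/-- `τ` is the free product of its restrictions `τ_i`: alternating words in the
`τ`-centered subalgebras `ℂ⟨x_i⟩` have vanishing `τ`-value. -/
def IsFreeProduct {r : ι → ℕ} (τ : FAlg (gen r) →ₗ[ℂ] ℂ) : Prop :=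
  ∀ (k : ℕ), 0 < k → ∀ (idx : Fin k → ι) (p : ∀ l, FAlg (Fin (r (idx l)))),
    (∀ l, τ (inclAlg r (idx l) (p l)) = 0) →
    (∀ (l : Fin k) (hl : (l : ℕ) + 1 < k), idx l ≠ idx ⟨(l : ℕ) + 1, hl⟩) →
    τ ((List.ofFn fun l => inclAlg r (idx l) (p l)).prod) = 0

/-- The partition function `Z_N^{(h, Ξ(N))}` of the orbital Gibbs micro-ensemble. -/
def ZOrbN (γ : ∀ N, Measure (UN N)) {r : ι → ℕ} (h : FAlg (gen r)) {N : ℕ}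
    (A : ∀ i, Fin (r i) → Mat N) : ℝ :=
  ∫ V : ι → UN N, gibbsWt h A V ∂(Measure.pi fun _ => γ N)

/-- The orbital Gibbs micro-ensemble `μ_N^{(h, Ξ(N))}`. -/
def muOrbN (γ : ∀ N, Measure (UN N)) {r : ι → ℕ} (h : FAlg (gen r)) {N : ℕ}
    (A : ∀ i, Fin (r i) → Mat N) : Measure (ι → UN N) :=
  (Measure.pi fun _ => γ N).withDensity
    fun V => ENNReal.ofReal (gibbsWt h A V / ZOrbN γ h A)

/-! ### Lebesgue measure on self-adjoint matrices and one-variable quantities -/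

/-- The parametrization of self-adjoint matrices by the diagonal entries and the real
and imaginary parts of the above-diagonal entries. -/
def matOfCoord (N : ℕ) (f : Fin N × Fin N → ℝ) : Mat N :=
  Matrix.of fun p q =>
    if p = q then (f (p, p) : ℂ)
    else if p < q then (f (p, q) : ℂ) + (f (q, p) : ℂ) * Complex.I
    else (f (q, p) : ℂ) - (f (p, q) : ℂ) * Complex.I

/-- The Lebesgue measure `Λ_N` on self-adjoint `N × N` matrices. -/
def LambdaMat (N : ℕ) : Measure (Mat N) :=
  Measure.map (matOfCoord N) (volume : Measure (Fin N × Fin N → ℝ))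

/-- The product Lebesgue measure `Λ_N^{⊗n}` on `n`-tuples of self-adjoint matrices. -/
def LambdaPow (n N : ℕ) : Measure (Fin n → Mat N) :=
  Measure.map (fun f i => matOfCoord N (f i))
    (volume : Measure (Fin n → Fin N × Fin N → ℝ))

/-- Evaluation of a polynomial in `n` single variables at an `n`-tuple of matrices. -/
def evalSingle {n : ℕ} {N : ℕ} (A : Fin n → Mat N) :
    FAlg (gen fun _ : Fin n => 1) →ₐ[ℂ] Mat N :=
  evalA fun i (_ : Fin 1) => A i

/-- The set `((M_N(ℂ)^{sa})_R)^n`. -/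
def ballR (n N : ℕ) (R : ℝ) : Set (Fin n → Mat N) :=
  {A | ∀ i, (A i).IsHermitian ∧ opNorm (A i) ≤ R}

/-- The partition function `Z_{R,N}^h`. -/
def ZR (n N : ℕ) (R : ℝ) (h : FAlg (gen fun _ : Fin n => 1)) : ℝ :=
  ∫ A in ballR n N R,
    Real.exp (-(N : ℝ) ^ 2 * (trN N (evalSingle A h)).re) ∂(LambdaPow n N)

/-- The free pressure `π_R(h)`. -/
def piR (n : ℕ) (R : ℝ) (h : FAlg (gen fun _ : Fin n => 1)) : EReal :=
  Filter.limsup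
    (fun N : ℕ => ((((N : ℝ) ^ 2)⁻¹ : ℝ) : EReal) * ((Real.log (ZR n N R h) : ℝ) : EReal)
      + ((((n : ℝ) / 2 * Real.log N) : ℝ) : EReal))
    Filter.atTop

/-- The Gibbs micro-ensemble `λ_{R,N}^h`. -/
def lambdaGibbs (n N : ℕ) (R : ℝ) (h : FAlg (gen fun _ : Fin n => 1)) :
    Measure (Fin n → Mat N) :=
  ((LambdaPow n N).restrict (ballR n N R)).withDensity
    fun A => ENNReal.ofReal
      (Real.exp (-(N : ℝ) ^ 2 * (trN N (evalSingle A h)).re) / ZR n N R h)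

/-- The microstate free entropy `χ_R` of a single-variable functional. -/
def chiR1 (R : ℝ) (τ : FAlg (Fin 1) →ₗ[ℂ] ℂ) : EReal :=
  ⨅ (m : ℕ) (δ : ℝ) (_ : 0 < δ),
    Filter.limsup
      (fun N : ℕ => ((((N : ℝ) ^ 2)⁻¹ : ℝ) : EReal) *
          ENNReal.log (LambdaMat N {B : Mat N | (fun _ : Fin 1 => B) ∈ microSet R τ N m δ})
        + ((((1 : ℝ) / 2 * Real.log N) : ℝ) : EReal))
      Filter.atTop

/-- The microstate free entropy `χ_R` of a functional on `n` single variables. -/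
def chiRn (n : ℕ) (R : ℝ) (σ : FAlg (gen fun _ : Fin n => 1) →ₗ[ℂ] ℂ) : EReal :=
  ⨅ (m : ℕ) (δ : ℝ) (_ : 0 < δ),
    Filter.limsup
      (fun N : ℕ => ((((N : ℝ) ^ 2)⁻¹ : ℝ) : EReal) *
          ENNReal.log (LambdaPow n N
            {A : Fin n → Mat N | (fun i (_ : Fin 1) => A i) ∈ microFull R σ N m δ})
        + ((((n : ℝ) / 2 * Real.log N) : ℝ) : EReal))
      Filter.atTop

/-- The `η`-entropy `η_R(τ)`, the minus Legendre transform of the free pressure. -/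
def etaR (n : ℕ) (R : ℝ) (τ : FAlg (gen fun _ : Fin n => 1) →ₗ[ℂ] ℂ) : EReal :=
  ⨅ (h : FAlg (gen fun _ : Fin n => 1)) (_ : IsSA h),
    (((τ h).re : ℝ) : EReal) + piR n R h

/-! ### The doubled (tensor) orbital free pressure -/

/-- The algebraic tensor product `ℂ⟨x⟩ ⊗ ℂ⟨x⟩`. -/
abbrev TAlg (r : ι → ℕ) := TensorProduct ℂ (FAlg (gen r)) (FAlg (gen r))

/-- The functional `τ ⊗ τ` on `ℂ⟨x⟩ ⊗ ℂ⟨x⟩`. -/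
def tensFun {r : ι → ℕ} (τ : FAlg (gen r) →ₗ[ℂ] ℂ) : TAlg r →ₗ[ℂ] ℂ :=
  (TensorProduct.lid ℂ ℂ).toLinearMap ∘ₗ TensorProduct.map τ τ

/-- The normalized trace as a linear map. -/
def trLin (N : ℕ) : Mat N →ₗ[ℂ] ℂ := (N : ℂ)⁻¹ • Matrix.traceLinearMap (Fin N) ℂ ℂ

/-- The functional `tr_N ⊗ tr_N` on `M_N(ℂ) ⊗ M_N(ℂ)`. -/
def tr2 (N : ℕ) : TensorProduct ℂ (Mat N) (Mat N) →ₗ[ℂ] ℂ :=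
  (TensorProduct.lid ℂ ℂ).toLinearMap ∘ₗ TensorProduct.map (trLin N) (trLin N)

/-- Evaluation of `ℂ⟨x⟩ ⊗ ℂ⟨x⟩` at a family of matrix tuples. -/
def evalT {r : ι → ℕ} {N : ℕ} (A : ∀ i, Fin (r i) → Mat N) :
    TAlg r →ₐ[ℂ] TensorProduct ℂ (Mat N) (Mat N) :=
  Algebra.TensorProduct.map (evalA A) (evalA A)

/-- The finite-`N` doubled orbital free pressure `π^{(2)}_{orb,R}(p : (τ_i); N, m, δ)`. -/
def pi2OrbN (γ : ∀ N, Measure (UN N)) (R : ℝ) {r : ι → ℕ} (p : TAlg r)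
    (τs : ∀ i, FAlg (Fin (r i)) →ₗ[ℂ] ℂ) (N m : ℕ) (δ : ℝ) : EReal :=
  ⨆ A ∈ microProd R τs N m δ,
    ((Real.log (∫ V : ι → UN N,
        Real.exp (-(N : ℝ) ^ 2 * (tr2 N (evalT (conjFam V A) p)).re)
        ∂(Measure.pi fun _ => γ N)) : ℝ) : EReal)

/-- The doubled orbital free pressure `π^{(2)}_{orb,R}(p : (τ_i))`. -/
def pi2Orb (γ : ∀ N, Measure (UN N)) (R : ℝ) {r : ι → ℕ} (p : TAlg r)
    (τs : ∀ i, FAlg (Fin (r i)) →ₗ[ℂ] ℂ) : EReal :=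
  ⨅ (m : ℕ) (δ : ℝ) (_ : 0 < δ),
    Filter.limsup
      (fun N : ℕ => ((((N : ℝ) ^ 2)⁻¹ : ℝ) : EReal) * pi2OrbN γ R p τs N m δ)
      Filter.atTop


/-! ### Auxiliary lemmas for Statement 6 -/

lemma equiv_ι {X : Type} (x : X) :
    FreeAlgebra.equivMonoidAlgebraFreeMonoid (R := ℂ) (FreeAlgebra.ι ℂ x)
      = MonoidAlgebra.single (FreeMonoid.of x) 1 := by
  rw [FreeAlgebra.equivMonoidAlgebraFreeMonoid]
  simp

lemma equiv_wordAlg {X : Type} (w : List X) :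
    FreeAlgebra.equivMonoidAlgebraFreeMonoid (R := ℂ) (wordAlg w)
      = MonoidAlgebra.single (FreeMonoid.ofList w) 1 := by
  induction w with
  | nil => simp [wordAlg]; rfl
  | cons x w ih =>
      rw [wordAlg, List.map_cons, List.prod_cons, map_mul, equiv_ι, ← wordAlg, ih,
        MonoidAlgebra.single_mul_single, one_mul]
      rfl

lemma conjCoeff_add {X : Type} (p q : FAlg X) :
    conjCoeff (p + q) = conjCoeff p + conjCoeff q := by
  rw [conjCoeff, conjCoeff, conjCoeff, map_add, MonoidAlgebra.coeff_add,
    Finsupp.mapRange_add (map_add (starRingEnd ℂ)), MonoidAlgebra.ofCoeff_add, map_add]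

lemma conjCoeff_smul_wordAlg {X : Type} (c : ℂ) (w : List X) :
    conjCoeff (c • wordAlg w) = (starRingEnd ℂ c) • wordAlg w := by
  have h1 : (MonoidAlgebra.ofCoeff (Finsupp.single (FreeMonoid.ofList w) (starRingEnd ℂ c))
      : MonoidAlgebra ℂ (FreeMonoid X))
      = (starRingEnd ℂ c) • (MonoidAlgebra.single (FreeMonoid.ofList w) 1
        : MonoidAlgebra ℂ (FreeMonoid X)) := by
    simp only [MonoidAlgebra.smul_single', mul_one, MonoidAlgebra.ofCoeff_single]
  rw [conjCoeff, _root_.map_smul, equiv_wordAlg, MonoidAlgebra.smul_single', mul_one,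
    MonoidAlgebra.coeff_single, Finsupp.mapRange_single, h1, _root_.map_smul, ← equiv_wordAlg, AlgEquiv.symm_apply_apply]

lemma conjCoeff_wordAlg {X : Type} (w : List X) : conjCoeff (wordAlg w) = wordAlg w := by
  rw [conjCoeff, equiv_wordAlg]
  simp only [MonoidAlgebra.coeff_single, Finsupp.mapRange_single, map_one,
    MonoidAlgebra.ofCoeff_single]
  exact (AlgEquiv.symm_apply_eq _).mpr (equiv_wordAlg w).symm

lemma star_wordAlg {X : Type} (w : List X) : star (wordAlg w) = wordAlg w.reverse := by
  induction w with
  | nil => simp [wordAlg]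
  | cons x w ih =>
      rw [wordAlg, List.map_cons, List.prod_cons, star_mul, ← wordAlg, ih,
        FreeAlgebra.star_ι, List.reverse_cons]
      simp [wordAlg, List.map_append, List.prod_append]

lemma star_smul' {X : Type} (c : ℂ) (p : FAlg X) : star (c • p) = c • star p := by
  rw [Algebra.smul_def, star_mul, FreeAlgebra.star_algebraMap, ← Algebra.commutes,
    ← Algebra.smul_def]

lemma fstar_add {X : Type} (p q : FAlg X) : fstar (p + q) = fstar p + fstar q := by
  simp [fstar, conjCoeff_add, star_add]

lemma fstar_smul_wordAlg {X : Type} (c : ℂ) (w : List X) :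
    fstar (c • wordAlg w) = (starRingEnd ℂ c) • wordAlg w.reverse := by
  rw [fstar, conjCoeff_smul_wordAlg, star_smul', star_wordAlg]

lemma fstar_wordAlg {X : Type} (w : List X) : fstar (wordAlg w) = wordAlg w.reverse := by
  simp [fstar, conjCoeff_wordAlg, star_wordAlg]


lemma symm_single {X : Type} (a : FreeMonoid X) (b : ℂ) :
    (FreeAlgebra.equivMonoidAlgebraFreeMonoid (R := ℂ) (X := X)).symm (MonoidAlgebra.single a b)
      = b • wordAlg a.toList := by
  have h1 : (MonoidAlgebra.single a b : MonoidAlgebra ℂ (FreeMonoid X))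
      = b • (MonoidAlgebra.single a 1 : MonoidAlgebra ℂ (FreeMonoid X)) := by
    rw [MonoidAlgebra.smul_single', mul_one]
  rw [h1, _root_.map_smul]
  congr 1
  have h2 := equiv_wordAlg (X := X) a.toList
  rw [FreeMonoid.ofList_toList] at h2
  rw [← h2, AlgEquiv.symm_apply_apply]

lemma exists_word_ne {X : Type} {τ₁ τ₂ : FAlg X →ₗ[ℂ] ℂ} (h : τ₁ ≠ τ₂) :
    ∃ w : List X, τ₁ (wordAlg w) ≠ τ₂ (wordAlg w) := by
  by_contra hc
  push_neg at hc
  apply h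
  ext p
  have key : ∀ q : MonoidAlgebra ℂ (FreeMonoid X),
      τ₁ ((FreeAlgebra.equivMonoidAlgebraFreeMonoid (R := ℂ) (X := X)).symm q)
        = τ₂ ((FreeAlgebra.equivMonoidAlgebraFreeMonoid (R := ℂ) (X := X)).symm q) := by
    intro q
    induction q using MonoidAlgebra.induction with
    | zero => simp
    | single_add a b f _ _ ih =>
        simp only [map_add]
        rw [ih, symm_single, _root_.map_smul, _root_.map_smul, hc]
  have := key (FreeAlgebra.equivMonoidAlgebraFreeMonoid (R := ℂ) (X := X) p)
  rwa [AlgEquiv.symm_apply_apply] at this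

lemma algHom_wordAlg {κ : Type} {B : Type*} [Semiring B] [Algebra ℂ B]
    (f : FAlg κ →ₐ[ℂ] B) (w : List κ) :
    f (wordAlg w) = (w.map fun x => f (FreeAlgebra.ι ℂ x)).prod := by
  induction w with
  | nil => simp [wordAlg]
  | cons x w ih => rw [wordAlg, List.map_cons, List.prod_cons, map_mul, ← wordAlg, ih,
      List.map_cons, List.prod_cons]

lemma wordMat_map {κ κ' : Type} {N : ℕ} (A : κ' → Mat N) (e : κ → κ') (w : List κ) :
    wordMat A (w.map e) = wordMat (fun x => A (e x)) w := by
  simp [wordMat, List.map_map, Function.comp_def]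

lemma wordMat_conj {κ : Type} {N : ℕ} (U : Mat N) (hU1 : U * star U = 1)
    (hU2 : star U * U = 1) (B : κ → Mat N) (w : List κ) :
    wordMat (fun j => U * B j * star U) w = U * wordMat B w * star U := by
  induction w with
  | nil => simp [wordMat, hU1]
  | cons x w ih =>
      have hw : wordMat (fun j => U * B j * star U) (x :: w)
          = (U * B x * star U) * wordMat (fun j => U * B j * star U) w := by
        simp [wordMat]
      have hw2 : wordMat B (x :: w) = B x * wordMat B w := by simp [wordMat]
      rw [hw, hw2, ih]
      have h3 : U * B x * star U * (U * wordMat B w * star U)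
          = U * B x * ((star U * U) * (wordMat B w * star U)) := by
        simp only [mul_assoc]
      rw [h3, hU2, one_mul]
      simp only [mul_assoc]

lemma trN_conj {N : ℕ} (U M : Mat N) (hU2 : star U * U = 1) :
    trN N (U * M * star U) = trN N M := by
  rw [trN, trN, Matrix.trace_mul_cycle, hU2, one_mul]

lemma trN_smul {N : ℕ} (c : ℂ) (M : Mat N) : trN N (c • M) = c * trN N M := by
  rw [trN, trN, Matrix.trace_smul, smul_eq_mul, mul_div_assoc]

lemma trN_add {N : ℕ} (M M' : Mat N) : trN N (M + M') = trN N M + trN N M' := by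
  rw [trN, trN, trN, Matrix.trace_add, add_div]

section Cont

variable {ι : Type} [Fintype ι]

lemma continuous_evalA_conj {r : ι → ℕ} {N : ℕ} (h : FAlg (gen r))
    (A : ∀ i, Fin (r i) → Mat N) :
    Continuous fun V : ι → UN N => evalA (conjFam V A) h := by
  induction h using FreeAlgebra.induction with
  | grade0 c => simpa using continuous_const
  | grade1 x =>
      have hV : ∀ i : ι, Continuous fun V : ι → UN N => (V i : Mat N) :=
        fun i => continuous_subtype_val.comp (continuous_apply i)
      have : (fun V : ι → UN N => evalA (conjFam V A) (FreeAlgebra.ι ℂ x))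
          = fun V : ι → UN N => (V x.1 : Mat N) * A x.1 x.2 * star (V x.1 : Mat N) := by
        funext V
        simp [evalA, conjFam]
      rw [this]
      exact ((hV x.1).matrix_mul continuous_const).matrix_mul
        ((hV x.1).matrix_conjTranspose)
  | mul a b ha hb =>
      simpa only [map_mul] using ha.matrix_mul hb
  | add a b ha hb =>
      simp only [map_add]
      exact continuous_add.comp (ha.prodMk hb)

lemma continuous_gibbsWt {r : ι → ℕ} {N : ℕ} (h : FAlg (gen r))
    (A : ∀ i, Fin (r i) → Mat N) :
    Continuous fun V : ι → UN N => gibbsWt h A V := by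
  unfold gibbsWt trN
  exact Real.continuous_exp.comp (continuous_const.mul
    (Complex.continuous_re.comp
      (((continuous_evalA_conj h A).matrix_trace).div_const _)))

end Cont

set_option maxHeartbeats 2000000 in
set_option synthInstance.maxHeartbeats 400000 in
/-- part of Proposition 3.1: if the restriction of `τ` to some
`ℂ⟨x_{i₀}⟩` differs from `τ_{i₀}`, then the minus Legendre transform of the orbital
free pressure at `τ` relative to `(τ_i)` is `-∞`. -/
theorem statement6 {n : ℕ} (hn : 1 ≤ n) (r : Fin n → ℕ) (hr : ∀ i, 1 ≤ r i) (R : ℝ) (hR : 0 < R)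
    (γ : ∀ N, Measure (UN N)) [∀ N, IsProbabilityMeasure (γ N)]
    (hγ : ∀ N, (γ N).IsMulLeftInvariant)
    (τs : ∀ i, FAlg (Fin (r i)) →ₗ[ℂ] ℂ) (hτs : ∀ i, IsHermState (τs i))
    (τ : FAlg (gen r) →ₗ[ℂ] ℂ) (hτ : IsHermState τ)
    (i₀ : Fin n) (hne : restr τ i₀ ≠ τs i₀) :
    etaOrbRel γ R τ τs = ⊥ := by
  classical
  obtain ⟨w0, hw0⟩ := exists_word_ne hne
  -- the embedding of variables
  set e : Fin (r i₀) → gen r := fun j => (⟨i₀, j⟩ : gen r) with he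
  set W : List (gen r) := w0.map e with hW
  have hincl : ∀ u : List (Fin (r i₀)), inclAlg r i₀ (wordAlg u) = wordAlg (u.map e) := by
    intro u
    have hfun : (fun x => (inclAlg r i₀) (FreeAlgebra.ι ℂ x))
        = fun x : Fin (r i₀) => FreeAlgebra.ι ℂ (e x) := by
      funext x
      simp [inclAlg, FreeAlgebra.lift_ι_apply, he]
    rw [algHom_wordAlg, hfun, wordAlg, List.map_map]
    simp [Function.comp_def]
  have hrestr : ∀ u : List (Fin (r i₀)), restr τ i₀ (wordAlg u) = τ (wordAlg (u.map e)) := by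
    intro u
    rw [restr, LinearMap.comp_apply, AlgHom.toLinearMap_apply, hincl]
  -- the word is nonempty
  have hw0ne : w0 ≠ [] := by
    intro hnil
    apply hw0
    subst hnil
    have h1 : wordAlg ([] : List (Fin (r i₀))) = 1 := by simp [wordAlg]
    rw [h1]
    have h2 : restr τ i₀ (1 : FAlg (Fin (r i₀))) = 1 := by
      rw [restr, LinearMap.comp_apply, AlgHom.toLinearMap_apply, map_one, hτ.1]
    rw [h2, (hτs i₀).1]
  -- basic values
  set z : ℂ := τ (wordAlg W) with hz
  set zs : ℂ := τs i₀ (wordAlg w0) with hzs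
  set a : ℂ := z - zs with haz
  have ha0 : a ≠ 0 := by
    rw [haz]
    refine sub_ne_zero.mpr ?_
    rw [hz, ← hrestr w0]
    exact hw0
  -- Hermitian conjugate values
  have hWrev : W.reverse = w0.reverse.map e := List.map_reverse.symm
  have hzrev : τ (wordAlg W.reverse) = starRingEnd ℂ z := by
    rw [← fstar_wordAlg, hτ.2, hz]
  have hzsrev : τs i₀ (wordAlg w0.reverse) = starRingEnd ℂ zs := by
    rw [← fstar_wordAlg, (hτs i₀).2, hzs]
  -- choice of the phase c
  obtain ⟨c, hcabs, hcne⟩ : ∃ c : ℂ, ‖c‖ = 1 ∧ (c * a).re ≠ 0 := by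
    by_cases hre : a.re ≠ 0
    · exact ⟨1, by simp, by simpa using hre⟩
    · push_neg at hre
      refine ⟨Complex.I, by simp, ?_⟩
      have him : a.im ≠ 0 := fun him => ha0 (Complex.ext hre him)
      simp [Complex.mul_re, hre]
      simpa using him
  set d : ℝ := 2 * (c * a).re with hdd
  have hd : d ≠ 0 := mul_ne_zero two_ne_zero hcne
  set δ : ℝ := |d| / 8 with hδdef
  have hδ : 0 < δ := by
    rw [hδdef]
    positivity
  set m : ℕ := w0.length with hm
  set uu : ℝ := 2 * (c * z).re with huu
  set ss : ℝ := 2 * (c * zs).re with hss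
  have hd_eq : d = uu - ss := by
    rw [hdd, huu, hss, haz, mul_sub, Complex.sub_re]
    ring
  -- the key bound, for every real t
  have key : ∀ t : ℝ, etaOrbRel γ R τ τs ≤ ((t * uu - t * ss + 2 * |t| * δ : ℝ) : EReal) := by
    intro t
    set H : FAlg (gen r) := ((t : ℂ) * c) • wordAlg W
      + ((t : ℂ) * starRingEnd ℂ c) • wordAlg W.reverse with hH
    have hSA : IsSA H := by
      rw [IsSA, hH, fstar_add, fstar_smul_wordAlg, fstar_smul_wordAlg, List.reverse_reverse]
      rw [map_mul, map_mul, Complex.conj_ofReal, Complex.conj_conj]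
      exact add_comm _ _
    have hτH : (τ H).re = t * uu := by
      have hconj : ((t:ℂ) * starRingEnd ℂ c) * starRingEnd ℂ z
          = starRingEnd ℂ ((t:ℂ) * c * z) := by
        rw [map_mul, map_mul, Complex.conj_ofReal]
      rw [hH, map_add, _root_.map_smul, _root_.map_smul, hzrev, smul_eq_mul, smul_eq_mul,
        ← hz, hconj, Complex.add_re, Complex.conj_re, mul_assoc, Complex.re_ofReal_mul, huu]
      ring
    set cb : ℝ := -(t * ss) + 2 * |t| * δ with hcb
    -- bound on the finite-N pressure
    have hN : ∀ N : ℕ, piOrbN γ R H τs N m δ ≤ (((N:ℝ)^2 * cb : ℝ) : EReal) := by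
      intro N
      refine iSup₂_le fun A hA => ?_
      rw [EReal.coe_le_coe_iff]
      set μ : Measure (Fin n → UN N) := Measure.pi fun _ => γ N with hμ
      have hmicro := (hA i₀).2
      set B : Fin (r i₀) → Mat N := A i₀ with hB
      have hVtr : ∀ (V : Fin n → UN N) (u : List (Fin (r i₀))),
          trN N (evalA (conjFam V A) (wordAlg (u.map e))) = trN N (wordMat B u) := by
        intro V u
        have h1 : evalA (conjFam V A) (wordAlg (u.map e))
            = wordMat (fun p : gen r => conjFam V A p.1 p.2) (u.map e) := by
          have hfun : (fun x => (evalA (conjFam V A)) (FreeAlgebra.ι ℂ x))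
              = fun p : gen r => conjFam V A p.1 p.2 := by
            funext x
            simp [evalA, FreeAlgebra.lift_ι_apply]
          rw [algHom_wordAlg, hfun, wordMat]
        rw [h1, wordMat_map]
        have h2 : (fun x : Fin (r i₀) => conjFam V A (e x).1 (e x).2)
            = fun j => (V i₀ : Mat N) * B j * star (V i₀ : Mat N) := by
          funext j
          simp [conjFam, he, hB]
          rfl
        rw [h2, wordMat_conj _ (V i₀).2.2 (V i₀).2.1, trN_conj _ _ (V i₀).2.1]
      set T1 : ℂ := trN N (wordMat B w0) with hT1
      set T2 : ℂ := trN N (wordMat B w0.reverse) with hT2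
      have h₁ : ‖T1 - zs‖ < δ := by
        simpa [hT1, hzs] using hmicro w0 hw0ne le_rfl
      have h₂ : ‖T2 - starRingEnd ℂ zs‖ < δ := by
        have := hmicro w0.reverse (by simpa using hw0ne) (by simp [hm])
        rwa [hzsrev, ← hT2] at this
      -- pointwise value of the trace
      have hEval : ∀ V : Fin n → UN N,
          trN N (evalA (conjFam V A) H)
            = (t:ℂ) * (c * T1 + starRingEnd ℂ c * T2) := by
        intro V
        rw [hH, map_add, _root_.map_smul, _root_.map_smul, trN_add, trN_smul, trN_smul]
        rw [show W = w0.map e from hW, hWrev, hVtr V w0, hVtr V w0.reverse, ← hT1, ← hT2]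
        ring
      -- real-part estimate
      have hEst : ∀ V : Fin n → UN N,
          |(trN N (evalA (conjFam V A) H)).re - t * ss| ≤ 2 * |t| * δ := by
        intro V
        rw [hEval V, Complex.re_ofReal_mul]
        have hssre : ss = (c * zs + starRingEnd ℂ c * starRingEnd ℂ zs).re := by
          rw [hss, show starRingEnd ℂ c * starRingEnd ℂ zs = starRingEnd ℂ (c * zs) by
            rw [map_mul], Complex.add_re, Complex.conj_re]
          ring
        have h3 : |(c * T1 + starRingEnd ℂ c * T2).re - ss| ≤ 2 * δ := by
          rw [hssre]
          have h4 : (c * T1 + starRingEnd ℂ c * T2).re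
              - (c * zs + starRingEnd ℂ c * starRingEnd ℂ zs).re
              = (c * (T1 - zs) + starRingEnd ℂ c * (T2 - starRingEnd ℂ zs)).re := by
            simp [Complex.add_re, Complex.sub_re, mul_sub]
            ring
          rw [h4]
          calc |(c * (T1 - zs) + starRingEnd ℂ c * (T2 - starRingEnd ℂ zs)).re|
              ≤ ‖c * (T1 - zs) + starRingEnd ℂ c * (T2 - starRingEnd ℂ zs)‖ :=
                Complex.abs_re_le_norm _
            _ ≤ ‖c * (T1 - zs)‖
                + ‖starRingEnd ℂ c * (T2 - starRingEnd ℂ zs)‖ :=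
                norm_add_le _ _
            _ = ‖T1 - zs‖ + ‖T2 - starRingEnd ℂ zs‖ := by
                rw [norm_mul, norm_mul, Complex.norm_conj, hcabs, one_mul, one_mul]
            _ ≤ 2 * δ := by linarith
        calc |t * (c * T1 + starRingEnd ℂ c * T2).re - t * ss|
            = |t| * |(c * T1 + starRingEnd ℂ c * T2).re - ss| := by
              rw [← abs_mul, mul_sub]
          _ ≤ |t| * (2 * δ) := by
              exact mul_le_mul_of_nonneg_left h3 (abs_nonneg t)
          _ = 2 * |t| * δ := by ring
      -- upper and lower bounds on the Gibbs weight
      have hub : ∀ V : Fin n → UN N, gibbsWt H A V ≤ Real.exp ((N:ℝ)^2 * cb) := by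
        intro V
        rw [gibbsWt]
        apply Real.exp_le_exp.mpr
        have := abs_le.mp (hEst V)
        have hNsq : (0:ℝ) ≤ (N:ℝ)^2 := by positivity
        rw [hcb]
        nlinarith [this.1, this.2]
      have hlb : ∀ V : Fin n → UN N,
          Real.exp ((N:ℝ)^2 * (-(t * ss) - 2 * |t| * δ)) ≤ gibbsWt H A V := by
        intro V
        rw [gibbsWt]
        apply Real.exp_le_exp.mpr
        have := abs_le.mp (hEst V)
        have hNsq : (0:ℝ) ≤ (N:ℝ)^2 := by positivity
        nlinarith [this.1, this.2]
      haveI : SecondCountableTopology (Mat N) :=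
        inferInstanceAs (SecondCountableTopology (Fin N → Fin N → ℂ))
      haveI : SecondCountableTopology (UN N) :=
        TopologicalSpace.secondCountableTopology_induced _ _ ((↑) : UN N → Mat N)
      haveI : BorelSpace (Fin n → UN N) := Pi.borelSpace
      haveI hprob : IsProbabilityMeasure μ := by
        rw [hμ]
        infer_instance
      have hgpos : ∀ V : Fin n → UN N, 0 < gibbsWt H A V := fun V => Real.exp_pos _
      have hint : Integrable (fun V : Fin n → UN N => gibbsWt H A V) μ := by
        refine Integrable.mono' (integrable_const (Real.exp ((N:ℝ)^2 * cb)))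
          (continuous_gibbsWt H A).aestronglyMeasurable (ae_of_all _ fun V => ?_)
        rw [Real.norm_eq_abs, abs_of_pos (hgpos V)]
        exact hub V
      have hI1 : ∫ V : Fin n → UN N, gibbsWt H A V ∂μ ≤ Real.exp ((N:ℝ)^2 * cb) := by
        calc ∫ V : Fin n → UN N, gibbsWt H A V ∂μ
            ≤ ∫ _ : Fin n → UN N, Real.exp ((N:ℝ)^2 * cb) ∂μ :=
              integral_mono hint (integrable_const _) hub
          _ = Real.exp ((N:ℝ)^2 * cb) := by simp [integral_const, measure_univ]
      have hI2 : Real.exp ((N:ℝ)^2 * (-(t * ss) - 2 * |t| * δ))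
          ≤ ∫ V : Fin n → UN N, gibbsWt H A V ∂μ := by
        calc Real.exp ((N:ℝ)^2 * (-(t * ss) - 2 * |t| * δ))
            = ∫ _ : Fin n → UN N, Real.exp ((N:ℝ)^2 * (-(t * ss) - 2 * |t| * δ)) ∂μ := by
              simp [integral_const, measure_univ]
          _ ≤ ∫ V : Fin n → UN N, gibbsWt H A V ∂μ :=
              integral_mono (integrable_const _) hint hlb
      have hpos : 0 < ∫ V : Fin n → UN N, gibbsWt H A V ∂μ :=
        lt_of_lt_of_le (Real.exp_pos _) hI2
      calc Real.log (∫ V : Fin n → UN N, gibbsWt H A V ∂μ)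
          ≤ Real.log (Real.exp ((N:ℝ)^2 * cb)) := Real.log_le_log hpos hI1
        _ = (N:ℝ)^2 * cb := Real.log_exp _
    -- limsup bound
    have hev : ∀ᶠ N : ℕ in Filter.atTop,
        (((((N:ℝ)^2)⁻¹ : ℝ)) : EReal) * piOrbN γ R H τs N m δ ≤ (cb : EReal) := by
      filter_upwards [Filter.eventually_ge_atTop 1] with N hN1
      have hN2 : (0:ℝ) < (N:ℝ)^2 := by
        have : (1:ℝ) ≤ (N:ℝ) := by exact_mod_cast hN1
        positivity
      calc (((((N:ℝ)^2)⁻¹ : ℝ)) : EReal) * piOrbN γ R H τs N m δ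
          ≤ (((((N:ℝ)^2)⁻¹ : ℝ)) : EReal) * (((N:ℝ)^2 * cb : ℝ) : EReal) :=
            mul_le_mul_of_nonneg_left (hN N) (by exact_mod_cast inv_nonneg.mpr hN2.le)
        _ = (cb : EReal) := by
            rw [← EReal.coe_mul]
            congr 1
            field_simp
    have hlimsup : Filter.limsup
        (fun N : ℕ => (((((N:ℝ)^2)⁻¹ : ℝ)) : EReal) * piOrbN γ R H τs N m δ)
        Filter.atTop ≤ (cb : EReal) :=
      Filter.limsup_le_of_le (by isBoundedDefault) hev
    have hpi : piOrb γ R H τs ≤ (cb : EReal) := by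
      rw [piOrb]
      exact le_trans (iInf_le_of_le m (iInf_le_of_le δ (iInf_le _ hδ))) hlimsup
    calc etaOrbRel γ R τ τs ≤ (((τ H).re : ℝ) : EReal) + piOrb γ R H τs := by
          rw [etaOrbRel]
          exact iInf₂_le H hSA
      _ ≤ ((t * uu : ℝ) : EReal) + ((cb : ℝ) : EReal) :=
          add_le_add (by rw [hτH]) hpi
      _ = ((t * uu - t * ss + 2 * |t| * δ : ℝ) : EReal) := by
          rw [← EReal.coe_add]
          congr 1
          rw [hcb]
          ring
  -- conclude
  rw [EReal.eq_bot_iff_forall_lt]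
  intro y
  have hd2 : 0 < d^2 := lt_of_le_of_ne (sq_nonneg d) (Ne.symm (pow_ne_zero 2 hd))
  set K : ℝ := (4 * (|y| + 1)) / (3 * d^2) with hK
  have hKpos : 0 < K := by
    rw [hK]
    positivity
  refine lt_of_le_of_lt (key (-K * d)) ?_
  have hval : (-K * d) * uu - (-K * d) * ss + 2 * |(-K * d)| * δ = -(|y| + 1) := by
    have habs : |(-K * d)| = K * |d| := by
      rw [abs_mul, abs_neg, abs_of_pos hKpos]
    rw [habs, hδdef]
    have hsq : |d| * |d| = d^2 := by
      rw [← abs_mul, ← sq, abs_of_pos hd2]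
    have h5 : (-K * d) * uu - (-K * d) * ss = -K * d^2 := by
      have : uu - ss = d := hd_eq.symm
      calc (-K * d) * uu - (-K * d) * ss = (-K * d) * (uu - ss) := by ring
        _ = -K * d^2 := by rw [this]; ring
    rw [h5]
    have h6 : 2 * (K * |d|) * (|d| / 8) = K * d^2 / 4 := by
      rw [← hsq]
      ring
    rw [h6]
    have h7 : K * d^2 = 4 * (|y| + 1) / 3 := by
      rw [hK, div_mul_eq_mul_div]
      rw [mul_div_mul_right _ _ hd2.ne']
    have h8 : -K * d^2 + K * d^2 / 4 = -(3/4) * (K * d^2) := by ring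
    rw [h8, h7]
    ring
  rw [hval]
  exact_mod_cast (by linarith [neg_abs_le y] : -(|y| + 1) < y)

end OrbFP

end
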